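/- Consider feasible parameters for a linked system of f ≥ 3 proper symmetric group divisible designs: v = mn, λ₁ = k(k−m)/(m(n−1)), λ₂ = k²/(mn), and σ−τ = ±√(k(mn−k)/(m(n−1))). If λ₁ = 0 and all parameters and α = k/m are integers, then there exists a positive integer l such that (v,k,m,n,λ₁,λ₂) = (n³l², n²l², n²l², n, 0, nl²). -/

import Mathlib

/-- Feasible parameters of a linked system of `f ≥ 3` proper symmetric group
divisible designs with `λ₁ = 0`: if `v = mn`, `λ₁ = k(k−m)/(m(n−1))`,
`λ₂ = k²/(mn)`, `α = k/m`, `σ, τ` are integers with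
`mn·σ = k² + (mn−k)(σ−τ)`, `mn·τ = k² − k(σ−τ)`, and
`(σ−τ)² = k(mn−k)/(m(n−1))`, then with `λ₁ = 0` there exists a positive
integer `l` such that `(v,k,m,n,λ₁,λ₂) = (n³l², n²l², n²l², n, 0, nl²)`. -/
theorem stmt19 (v k m n : ℕ) (l1 l2 σ τ α : ℤ)
    (hm : 2 ≤ m) (hn : 2 ≤ n) (hv : v = m * n)
    (hk0 : 0 < k) (hkv : k < v)
    (hl1 : (l1 : ℝ) = (k : ℝ) * ((k : ℝ) - (m : ℝ)) / ((m : ℝ) * ((n : ℝ) - 1)))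
    (hl2 : (l2 : ℝ) = (k : ℝ) ^ 2 / ((m : ℝ) * (n : ℝ)))
    (hα : (α : ℝ) = (k : ℝ) / (m : ℝ))
    (hσ : ((m : ℝ) * (n : ℝ)) * (σ : ℝ) =
      (k : ℝ) ^ 2 + ((m : ℝ) * (n : ℝ) - (k : ℝ)) * ((σ : ℝ) - (τ : ℝ)))
    (hτ : ((m : ℝ) * (n : ℝ)) * (τ : ℝ) =
      (k : ℝ) ^ 2 - (k : ℝ) * ((σ : ℝ) - (τ : ℝ)))
    (hst : ((σ : ℝ) - (τ : ℝ)) ^ 2 =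
      (k : ℝ) * ((m : ℝ) * (n : ℝ) - (k : ℝ)) / ((m : ℝ) * ((n : ℝ) - 1)))
    (hzero : l1 = 0) :
    ∃ l : ℕ, 0 < l ∧ v = n ^ 3 * l ^ 2 ∧ k = n ^ 2 * l ^ 2 ∧
      m = n ^ 2 * l ^ 2 ∧ l2 = (n : ℤ) * (l : ℤ) ^ 2 := by
  have hmR : (0:ℝ) < (m:ℝ) := by exact_mod_cast Nat.lt_of_lt_of_le Nat.zero_lt_two hm
  have hnR : (2:ℝ) ≤ (n:ℝ) := by exact_mod_cast hn
  have hn1 : ((n:ℝ) - 1) ≠ 0 := by nlinarith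
  have hm0 : (m:ℝ) ≠ 0 := ne_of_gt hmR
  have hn0 : (n:ℝ) ≠ 0 := by positivity
  -- k = m
  have hkm : k = m := by
    rw [hzero] at hl1
    field_simp at hl1
    simp at hl1
    rcases hl1 with h | h
    · omega
    · have : (k:ℝ) = (m:ℝ) := by linarith
      exact_mod_cast this
  subst hkm hv
  -- k = m now; n * l2 = k  (in ℝ and ℤ)
  have hml2 : ((k:ℝ)) = (n:ℝ) * (l2:ℝ) := by
    rw [hl2]; field_simp
  have hd : ((σ:ℝ) - (τ:ℝ)) = (n:ℝ) * ((l2:ℝ) - (τ:ℝ)) := by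
    have h2 : (n:ℝ) * (τ:ℝ) = (k:ℝ) - ((σ:ℝ) - (τ:ℝ)) := by
      apply mul_left_cancel₀ hm0
      nlinarith [hτ]
    nlinarith [h2, hml2]
  have hsq : ((σ:ℝ) - (τ:ℝ))^2 = (k:ℝ) := by
    rw [hst]; field_simp
  set d : ℤ := l2 - τ with hdd
  have hmd : (k:ℤ) = (n:ℤ)^2 * d^2 := by
    have h3 : ((k:ℤ):ℝ) = (((n:ℤ)^2 * d^2 : ℤ) : ℝ) := by
      rw [hdd]; push_cast
      rw [← hsq, hd]; ring
    exact_mod_cast h3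
  have hd0 : d ≠ 0 := by
    intro h
    have h4 : (k:ℤ) = 0 := by rw [hmd, h]; ring
    omega
  have habs : ((d.natAbs : ℤ))^2 = d^2 := by
    rw [sq, sq, Int.natAbs_mul_self']
  have hk : k = n ^ 2 * d.natAbs ^ 2 := by
    have h5 : (k:ℤ) = (n:ℤ) ^ 2 * ((d.natAbs : ℤ)) ^ 2 := by rw [habs]; exact hmd
    exact_mod_cast h5
  have hl2int : (k:ℤ) = (n:ℤ) * l2 := by
    have : ((k:ℤ):ℝ) = (((n:ℤ) * l2 : ℤ):ℝ) := by push_cast; exact hml2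
    exact_mod_cast this
  refine ⟨d.natAbs, Int.natAbs_pos.2 hd0, ?_, hk, hk, ?_⟩
  · rw [hk]; ring
  · have hnz : (n:ℤ) ≠ 0 := by exact_mod_cast (by omega : n ≠ 0)
    apply mul_left_cancel₀ hnz
    rw [← hl2int, hmd, habs]; ring
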